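/- Fix integers 2 ≤ r ≤ n and let B_n = {(a,s): 1 ≤ a,s ≤ n, a+(r−1)s ≤ n}. For (a,s) ∈ B_n define B_{a,s} = {a, a+s, …, a+(r−1)s} if a ≤ s, and B_{a,s} = {a−s, a, a+s, …, a+(r−1)s} if a > s. Then |{(a,s,b,t) ∈ B_n × B_n : B_{a,s} ∩ B_{b,t} ≠ ∅}| ≤ 9n³/2. -/

import Mathlib

/-- `B_{a,s}` : the `r`-term progression `{a, a+s, …, a+(r−1)s}`, extended by
`a−s` when `a > s`. -/
def progSet (r a s : ℕ) : Finset ℕ :=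
  ((Finset.range r).image fun j => a + j * s) ∪ (if s < a then {a - s} else ∅)

/-- `B_n` : pairs `(a,s)` with `1 ≤ a,s ≤ n` and `a+(r−1)s ≤ n`. -/
def Bn (n r : ℕ) : Finset (ℕ × ℕ) :=
  (Finset.Icc 1 n ×ˢ Finset.Icc 1 n).filter fun q : ℕ × ℕ => q.1 + (r - 1) * q.2 ≤ n

def dec (a s j1 j2 t : ℕ) : ℕ :=
  let x := if j1 = 0 then a - s else a + (j1 - 1) * s
  if j2 = 0 then x + t else x - (j2 - 1) * t

lemma mem_progSet {r a s x : ℕ} (h : x ∈ progSet r a s) :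
    (∃ j < r, x = a + j * s) ∨ (s < a ∧ x = a - s) := by
  simp only [progSet, Finset.mem_union, Finset.mem_image, Finset.mem_range] at h
  rcases h with ⟨j, hj, rfl⟩ | h
  · exact Or.inl ⟨j, hj, rfl⟩
  · by_cases hs : s < a
    · simp [hs] at h; exact Or.inr ⟨hs, h⟩
    · simp [hs] at h

lemma exists_pick {r a s b t : ℕ}
    (h : (progSet r a s ∩ progSet r b t).Nonempty) :
    ∃ p : ℕ × ℕ, p.1 < r + 1 ∧ p.2 < r + 1 ∧ dec a s p.1 p.2 t = b := by
  obtain ⟨x, hx⟩ := h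
  rw [Finset.mem_inter] at hx
  obtain ⟨hx1, hx2⟩ := hx
  have h1 := mem_progSet hx1
  have h2 := mem_progSet hx2
  obtain ⟨j1, hj1, hxval⟩ :
      ∃ j1 < r + 1, (if j1 = 0 then a - s else a + (j1 - 1) * s) = x := by
    rcases h1 with ⟨j, hj, rfl⟩ | ⟨hs, rfl⟩
    · exact ⟨j + 1, by omega, by simp⟩
    · exact ⟨0, by omega, by simp⟩
  rcases h2 with ⟨j, hj, rfl⟩ | ⟨hs, hxb⟩
  · exact ⟨(j1, j + 1), hj1, by omega, by simp [dec, hxval]⟩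
  · exact ⟨(j1, 0), hj1, by omega, by simp [dec, hxval, hxb]; omega⟩

open Classical in
noncomputable def F (r : ℕ) (q : (ℕ × ℕ) × ℕ × ℕ) : (ℕ × ℕ) × ℕ × ℕ × ℕ :=
  if h : ∃ p : ℕ × ℕ, p.1 < r + 1 ∧ p.2 < r + 1 ∧
      dec q.1.1 q.1.2 p.1 p.2 q.2.2 = q.2.1 then
    (q.1, h.choose.1, h.choose.2, q.2.2)
  else (q.1, 0, 0, q.2.2)

lemma card_bound (n r : ℕ) (hr : 2 ≤ r) :
    ((Bn n r ×ˢ Bn n r).filter fun q : (ℕ × ℕ) × ℕ × ℕ =>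
        (progSet r q.1.1 q.1.2 ∩ progSet r q.2.1 q.2.2).Nonempty).card
      ≤ (Bn n r).card * ((r + 1) * ((r + 1) * (n / (r - 1)))) := by
  have key : ∀ q ∈ (Bn n r ×ˢ Bn n r).filter fun q : (ℕ × ℕ) × ℕ × ℕ =>
      (progSet r q.1.1 q.1.2 ∩ progSet r q.2.1 q.2.2).Nonempty,
      ∃ p : ℕ × ℕ, p.1 < r + 1 ∧ p.2 < r + 1 ∧
        dec q.1.1 q.1.2 p.1 p.2 q.2.2 = q.2.1 := by
    intro q hq
    rw [Finset.mem_filter] at hq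
    exact exists_pick hq.2
  have hcard := Finset.card_le_card_of_injOn (F r)
    (s := (Bn n r ×ˢ Bn n r).filter fun q : (ℕ × ℕ) × ℕ × ℕ =>
      (progSet r q.1.1 q.1.2 ∩ progSet r q.2.1 q.2.2).Nonempty)
    (t := Bn n r ×ˢ (Finset.range (r + 1) ×ˢ (Finset.range (r + 1) ×ˢ
      Finset.Icc 1 (n / (r - 1)))))
    (by
      intro q hq
      have hex := key q hq
      rw [Finset.mem_coe, Finset.mem_filter, Finset.mem_product] at hq
      obtain ⟨⟨hq1, hq2⟩, -⟩ := hq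
      have hBt : q.2 ∈ Bn n r := hq2
      rw [Bn, Finset.mem_filter, Finset.mem_product, Finset.mem_Icc, Finset.mem_Icc] at hBt
      have ht1 : 1 ≤ q.2.2 := hBt.1.2.1
      have ht2 : q.2.2 ≤ n / (r - 1) := by
        rw [Nat.le_div_iff_mul_le (by omega : 0 < r - 1)]
        have := hBt.2
        have hb1 : 1 ≤ q.2.1 := hBt.1.1.1
        nlinarith [hBt.2]
      simp only [F, dif_pos hex]
      have hp := hex.choose_spec
      simp only [Finset.mem_coe, Finset.mem_product, Finset.mem_range, Finset.mem_Icc]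
      exact ⟨hq1, hp.1, hp.2.1, ht1, ht2⟩)
    (by
      intro q hq q' hq' heq
      have hex := key q hq
      have hex' := key q' hq'
      simp only [F, dif_pos hex, dif_pos hex'] at heq
      have e1 := hex.choose_spec.2.2
      have e2 := hex'.choose_spec.2.2
      obtain ⟨⟨a,s⟩,b,t⟩ := q
      obtain ⟨⟨a',s'⟩,b',t'⟩ := q'
      simp only [Prod.mk.injEq] at heq ⊢
      obtain ⟨⟨ha, hs⟩, hj1, hj2, ht⟩ := heq
      subst ha; subst hs; subst ht
      refine ⟨⟨rfl, rfl⟩, ?_, rfl⟩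
      simp only at e1 e2
      rw [← e1, ← e2, hj1, hj2])
  calc _ ≤ _ := hcard
    _ = _ := by
      simp [Finset.card_product, Nat.card_Icc]

lemma Bn_card_bound (n r : ℕ) (hr : 2 ≤ r) :
    2 * (r - 1) * (Bn n r).card ≤ n ^ 2 := by
  set d := r - 1 with hd
  have hd1 : 1 ≤ d := by omega
  set m := n / d with hm
  have hsub : Bn n r ⊆ (Finset.Icc 1 m).biUnion
      (fun s => Finset.Icc 1 (n - d * s) ×ˢ {s}) := by
    intro q hq
    rw [Bn, Finset.mem_filter, Finset.mem_product, Finset.mem_Icc, Finset.mem_Icc] at hq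
    obtain ⟨⟨⟨ha1, ha2⟩, hs1, hs2⟩, hle⟩ := hq
    rw [← hd] at hle
    rw [Finset.mem_biUnion]
    refine ⟨q.2, ?_, ?_⟩
    · rw [Finset.mem_Icc]
      refine ⟨hs1, ?_⟩
      rw [hm, Nat.le_div_iff_mul_le (by omega : 0 < d)]
      nlinarith
    · rw [Finset.mem_product, Finset.mem_Icc, Finset.mem_singleton]
      exact ⟨⟨ha1, by omega⟩, rfl⟩
  have h1 : (Bn n r).card ≤ ∑ s ∈ Finset.Icc 1 m, (n - d * s) := by
    calc (Bn n r).card ≤ _ := Finset.card_le_card hsub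
      _ ≤ ∑ s ∈ Finset.Icc 1 m, (Finset.Icc 1 (n - d * s) ×ˢ ({s} : Finset ℕ)).card :=
        Finset.card_biUnion_le
      _ = ∑ s ∈ Finset.Icc 1 m, (n - d * s) := by
        refine Finset.sum_congr rfl fun s _ => ?_
        simp [Nat.card_Icc]
  -- now work in ℤ
  have hdm : d * m ≤ n := by rw [hm]; exact Nat.mul_div_le n d
  have hcast : ∀ s ∈ Finset.Icc 1 m, ((n - d * s : ℕ) : ℤ) = (n : ℤ) - d * s := by
    intro s hs
    rw [Finset.mem_Icc] at hs
    have : d * s ≤ n := le_trans (Nat.mul_le_mul_left d hs.2) hdm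
    push_cast [Nat.cast_sub this]
    ring
  have hsum : ((∑ s ∈ Finset.Icc 1 m, (n - d * s) : ℕ) : ℤ)
      = (m : ℤ) * n - d * ∑ s ∈ Finset.Icc 1 m, (s : ℤ) := by
    push_cast
    rw [Finset.sum_congr rfl hcast, Finset.sum_sub_distrib, ← Finset.mul_sum]
    simp [Nat.card_Icc, mul_comm]
  have hgauss : (∑ s ∈ Finset.Icc 1 m, (s : ℤ)) * 2 = (m : ℤ) * (m + 1) := by
    induction m with
    | zero => simp
    | succ k ih =>
      rw [Finset.sum_Icc_succ_top (by omega)]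
      push_cast
      ring_nf
      ring_nf at ih
      linarith
  -- final integer inequality
  have : (2 : ℤ) * d * (Bn n r).card ≤ (n : ℤ) ^ 2 := by
    have hS : (2 : ℤ) * ((∑ s ∈ Finset.Icc 1 m, (n - d * s) : ℕ) : ℤ)
        = 2 * m * n - d * ((m : ℤ) * (m + 1)) := by
      rw [hsum, ← hgauss]; ring
    have h1' : ((Bn n r).card : ℤ) ≤ ((∑ s ∈ Finset.Icc 1 m, (n - d * s) : ℕ) : ℤ) := by
      exact_mod_cast h1
    have hdm' : (d : ℤ) * m ≤ n := by exact_mod_cast hdm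
    have hd1' : (1 : ℤ) ≤ d := by exact_mod_cast hd1
    have hm0 : (0 : ℤ) ≤ m := Int.natCast_nonneg m
    nlinarith [sq_nonneg ((n : ℤ) - d * m), mul_nonneg (mul_nonneg (le_trans zero_le_one hd1') (le_trans zero_le_one hd1')) hm0]
  have hfinal : ((2 * (r - 1) * (Bn n r).card : ℕ) : ℤ) ≤ ((n ^ 2 : ℕ) : ℤ) := by
    push_cast
    exact this
  exact_mod_cast hfinal

/-- The number of quadruples `(a,s,b,t) ∈ B_n × B_n` with
`B_{a,s} ∩ B_{b,t} ≠ ∅` is at most `9n³/2`. -/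
theorem stmt6 (n r : ℕ) (hr : 2 ≤ r) (hrn : r ≤ n) :
    ((((Bn n r ×ˢ Bn n r).filter fun q : (ℕ × ℕ) × ℕ × ℕ =>
        (progSet r q.1.1 q.1.2 ∩ progSet r q.2.1 q.2.2).Nonempty).card : ℝ))
      ≤ 9 * (n : ℝ) ^ 3 / 2 := by
  have hC := card_bound n r hr
  have hB := Bn_card_bound n r hr
  have hm : n / (r - 1) * (r - 1) ≤ n := Nat.div_mul_le_self n (r - 1)
  have hr1 : 1 ≤ r := by omega
  set C := ((Bn n r ×ˢ Bn n r).filter fun q : (ℕ × ℕ) × ℕ × ℕ =>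
      (progSet r q.1.1 q.1.2 ∩ progSet r q.2.1 q.2.2).Nonempty).card with hCdef
  set B := (Bn n r).card with hBdef
  set M := n / (r - 1) with hMdef
  have c1 : (C : ℝ) ≤ (B : ℝ) * (((r : ℝ) + 1) * (((r : ℝ) + 1) * M)) := by
    exact_mod_cast hC
  have c2 : 2 * ((r : ℝ) - 1) * B ≤ (n : ℝ) ^ 2 := by
    have h := (Nat.cast_le (α := ℝ)).mpr hB
    push_cast [Nat.cast_sub hr1] at h
    linarith
  have c3 : ((r : ℝ) - 1) * M ≤ n := by
    have h := (Nat.cast_le (α := ℝ)).mpr hm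
    push_cast [Nat.cast_sub hr1] at h
    linarith
  have hr2 : (2 : ℝ) ≤ r := by exact_mod_cast hr
  have h5 : (r : ℝ) + 1 ≤ 3 * ((r : ℝ) - 1) := by linarith
  have hB0 : (0 : ℝ) ≤ B := Nat.cast_nonneg _
  have hM0 : (0 : ℝ) ≤ M := Nat.cast_nonneg _
  have hn0 : (0 : ℝ) ≤ n := Nat.cast_nonneg _
  have step1 : (B : ℝ) * (((r : ℝ) + 1) * (((r : ℝ) + 1) * M))
      ≤ 9 * (((r : ℝ) - 1) * B) * (((r : ℝ) - 1) * M) := by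
    nlinarith [mul_nonneg (mul_nonneg (sub_nonneg.2 h5)
        (by linarith : (0 : ℝ) ≤ 3 * ((r : ℝ) - 1) + ((r : ℝ) + 1)))
      (mul_nonneg hB0 hM0)]
  have step2 : 9 * (((r : ℝ) - 1) * B) * (((r : ℝ) - 1) * M)
      ≤ 9 * ((n : ℝ) ^ 2 / 2) * n := by
    have hDB : ((r : ℝ) - 1) * B ≤ (n : ℝ) ^ 2 / 2 := by linarith
    have hDM0 : (0 : ℝ) ≤ ((r : ℝ) - 1) * M := mul_nonneg (by linarith) hM0
    have := mul_le_mul hDB c3 hDM0 (by positivity)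
    linarith
  have : (C : ℝ) ≤ 9 * ((n : ℝ) ^ 2 / 2) * n := by linarith
  calc (C : ℝ) ≤ 9 * ((n : ℝ) ^ 2 / 2) * n := this
    _ = 9 * (n : ℝ) ^ 3 / 2 := by ring
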